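/- arXiv:1704.05171 — 5 statements merged into one kernel-verified Lean document; each statement's English description precedes it below -/
import Mathlib

section
/- Let F be a field, m ≥ 1, A : Matrix (Fin m) (Fin m × Fin m) F, g an invertible m×m matrix over F, and B = τ(g, A) = g * A * (g⁻¹ ⊗ g⁻¹). Then the m×m matrix with (i,j) entry trace(B_i * B_j) equals (g⁻¹)ᵗ * M * g⁻¹, where M is the m×m matrix with (i,j) entry trace(A_i * A_j). In the paper's notation: T̃r(B^t̄ B) = ((g⁻¹))ᵗ · T̃r(A^t̄ A) · g⁻¹. -/
open Matrix Kronecker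

/-- The `i`-th block of a matrix of structure constants. -/
def blk {F : Type*} {m : ℕ} (A : Matrix (Fin m) (Fin m × Fin m) F) (i : Fin m) :
    Matrix (Fin m) (Fin m) F := fun a b => A a (i, b)

/-- The trace form `T̃r(Aᵗ̄A)` of a matrix of structure constants. -/
def trForm {F : Type*} [Field F] {m : ℕ} (A : Matrix (Fin m) (Fin m × Fin m) F) :
    Matrix (Fin m) (Fin m) F := fun i j => (blk A i * blk A j).trace

lemma blk_tau {F : Type*} [Field F] {m : ℕ}
    (A : Matrix (Fin m) (Fin m × Fin m) F) (g : Matrix (Fin m) (Fin m) F) (i : Fin m) :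
    blk (g * A * (g⁻¹ ⊗ₖ g⁻¹)) i = ∑ j, g⁻¹ j i • (g * blk A j * g⁻¹) := by
  ext a b
  simp only [blk, Matrix.mul_apply, Matrix.sum_apply, Matrix.smul_apply,
    kroneckerMap_apply, Fintype.sum_prod_type, Finset.mul_sum, Finset.sum_mul,
    smul_eq_mul]
  refine Finset.sum_congr rfl fun j _ => ?_
  rw [Finset.sum_comm]
  conv_rhs => rw [Finset.sum_comm]
  refine Finset.sum_congr rfl fun k _ => ?_
  refine Finset.sum_congr rfl fun c _ => ?_
  ring

theorem stmt_3 (F : Type*) [Field F] (m : ℕ) (hm : 1 ≤ m)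
    (A : Matrix (Fin m) (Fin m × Fin m) F)
    (g : Matrix (Fin m) (Fin m) F) (hg : IsUnit g)
    (B : Matrix (Fin m) (Fin m × Fin m) F)
    (hB : B = g * A * (g⁻¹ ⊗ₖ g⁻¹)) :
    trForm B = (g⁻¹)ᵀ * trForm A * g⁻¹ := by
  have h1 : g⁻¹ * g = 1 := nonsing_inv_mul g ((isUnit_iff_isUnit_det g).mp hg)
  have key : ∀ p q : Fin m,
      (g * blk A p * g⁻¹ * (g * blk A q * g⁻¹)).trace = (blk A p * blk A q).trace := by
    intro p q
    rw [show g * blk A p * g⁻¹ * (g * blk A q * g⁻¹)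
        = g * (blk A p * (g⁻¹ * g) * blk A q) * g⁻¹ by
          simp only [Matrix.mul_assoc],
      h1, Matrix.mul_one, trace_mul_comm, ← Matrix.mul_assoc, ← Matrix.mul_assoc, h1,
      Matrix.one_mul]
  subst hB
  ext i j
  simp only [trForm, blk_tau, Finset.sum_mul, Finset.mul_sum, Matrix.smul_mul,
    Matrix.mul_smul, trace_sum, trace_smul, smul_eq_mul, Matrix.mul_apply,
    Matrix.transpose_apply, key]
  refine Finset.sum_congr rfl fun p _ => ?_
  refine Finset.sum_congr rfl fun q _ => ?_
  rw [trace_mul_comm]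
  ring
end

section
/- Let F be a field, m ≥ 1, k ≥ 1, A : Matrix (Fin m) (Fin m × Fin m) F, g an invertible m×m matrix over F with h = g⁻¹, and B = g * A * (h ⊗ h). Then for all multi-indices i, j : Fin k → Fin m: trace(∏_{l=0}^{k-1} (B_{i l} * B_{j l})) = ∑_{p, q : Fin k → Fin m} (∏_{l} h (p l) (i l)) * (∏_{l} h (q l) (j l)) * trace(∏_{l=0}^{k-1} (A_{p l} * A_{q l})), where the products of matrices are taken in increasing order of l. Equivalently, the m^k × m^k matrix T̃r((B^t̄ B)^⊗̄k), indexed by pairs of multi-indices with entry trace(∏_l B_{i l} B_{j l}), equals ((g⁻¹)^⊗k)ᵗ · T̃r((A^t̄ A)^⊗̄k) · (g⁻¹)^⊗k. -/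
open Matrix Kronecker

lemma blkB {F : Type*} [Field F] {m : ℕ} (A : Matrix (Fin m) (Fin m × Fin m) F)
    (g h : Matrix (Fin m) (Fin m) F) (i : Fin m) :
    blk (g * A * (h ⊗ₖ h)) i = ∑ p, h p i • (g * blk A p * h) := by
  ext a b
  simp only [blk, Matrix.mul_apply, Matrix.sum_apply, Matrix.smul_apply, smul_eq_mul,
    kroneckerMap_apply, Fintype.sum_prod_type, Finset.sum_mul, Finset.mul_sum]
  apply Finset.sum_congr rfl; intro p _
  apply Finset.sum_congr rfl; intro q _
  apply Finset.sum_congr rfl; intro c _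
  ring

lemma comb {F : Type*} [Field F] {m : ℕ} {g h : Matrix (Fin m) (Fin m) F}
    (hhg : h * g = 1) (X Y : Matrix (Fin m) (Fin m) F) :
    (g * X * h) * (g * Y * h) = g * (X * Y) * h := by
  calc (g * X * h) * (g * Y * h) = g * X * (h * g) * (Y * h) := by
        simp only [Matrix.mul_assoc]
    _ = g * (X * Y) * h := by rw [hhg, Matrix.mul_one]; simp only [Matrix.mul_assoc]

lemma pairB {F : Type*} [Field F] {m : ℕ} (A : Matrix (Fin m) (Fin m × Fin m) F)
    {g h : Matrix (Fin m) (Fin m) F} (hhg : h * g = 1) (a b : Fin m) :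
    blk (g * A * (h ⊗ₖ h)) a * blk (g * A * (h ⊗ₖ h)) b =
      ∑ p, ∑ q, (h p a * h q b) • (g * (blk A p * blk A q) * h) := by
  rw [blkB, blkB, Finset.sum_mul]
  apply Finset.sum_congr rfl; intro p _
  rw [Finset.mul_sum]
  apply Finset.sum_congr rfl; intro q _
  rw [smul_mul_assoc, mul_smul_comm, smul_smul, comb hhg]

lemma sumPiSucc {F : Type*} [Field F] {m k : ℕ}
    (f : (Fin (k + 1) → Fin m) → Matrix (Fin m) (Fin m) F) :
    ∑ p, f p = ∑ p0 : Fin m, ∑ p' : Fin k → Fin m, f (Fin.cons p0 p') := by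
  rw [← Equiv.sum_comp (Fin.consEquiv fun _ => Fin m), Fintype.sum_prod_type]
  rfl

lemma key {F : Type*} [Field F] {m : ℕ} (A : Matrix (Fin m) (Fin m × Fin m) F)
    {g h : Matrix (Fin m) (Fin m) F} (hhg : h * g = 1) (hgh : g * h = 1) :
    ∀ k (i j : Fin k → Fin m),
    (List.ofFn fun l => blk (g * A * (h ⊗ₖ h)) (i l) * blk (g * A * (h ⊗ₖ h)) (j l)).prod
      = ∑ p : Fin k → Fin m, ∑ q : Fin k → Fin m,
          ((∏ l, h (p l) (i l)) * ∏ l, h (q l) (j l)) •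
            (g * (List.ofFn fun l => blk A (p l) * blk A (q l)).prod * h)
  | 0, i, j => by simp [hgh]
  | (k+1), i, j => by
    rw [List.ofFn_succ, List.prod_cons,
      key A hhg hgh k (fun l => i l.succ) (fun l => j l.succ), pairB A hhg]
    rw [sumPiSucc, Finset.sum_mul]
    apply Finset.sum_congr rfl; intro p0 _
    rw [Finset.sum_mul]
    simp only [smul_mul_assoc, Finset.mul_sum, Finset.smul_sum, mul_smul_comm, smul_smul]
    rw [Finset.sum_comm]
    apply Finset.sum_congr rfl; intro p' _
    rw [sumPiSucc]
    apply Finset.sum_congr rfl; intro q0 _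
    apply Finset.sum_congr rfl; intro q' _
    rw [comb hhg]
    simp only [List.ofFn_succ, List.prod_cons, Fin.cons_zero, Fin.cons_succ,
      Fin.prod_univ_succ]
    congr 1
    ring

theorem stmt_4 (F : Type*) [Field F] (m k : ℕ) (hm : 1 ≤ m) (hk : 1 ≤ k)
    (A : Matrix (Fin m) (Fin m × Fin m) F)
    (g h : Matrix (Fin m) (Fin m) F) (hg : IsUnit g) (hh : h = g⁻¹)
    (B : Matrix (Fin m) (Fin m × Fin m) F)
    (hB : B = g * A * (h ⊗ₖ h)) :
    ∀ i j : Fin k → Fin m,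
      ((List.ofFn fun l : Fin k => blk B (i l) * blk B (j l)).prod).trace =
        ∑ p : Fin k → Fin m, ∑ q : Fin k → Fin m,
          (∏ l : Fin k, h (p l) (i l)) * (∏ l : Fin k, h (q l) (j l)) *
            ((List.ofFn fun l : Fin k => blk A (p l) * blk A (q l)).prod).trace := by
  intro i j
  have hdet : IsUnit g.det := (Matrix.isUnit_iff_isUnit_det g).mp hg
  have hhg : h * g = 1 := by rw [hh]; exact Matrix.nonsing_inv_mul g hdet
  have hgh : g * h = 1 := by rw [hh]; exact Matrix.mul_nonsing_inv g hdet
  subst hB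
  rw [key A hhg hgh k i j, Matrix.trace_sum]
  apply Finset.sum_congr rfl; intro p _
  rw [Matrix.trace_sum]
  apply Finset.sum_congr rfl; intro q _
  rw [Matrix.trace_smul, smul_eq_mul, Matrix.trace_mul_cycle, hhg,
    Matrix.one_mul]
end

section
/- Let F be a field of characteristic different from 2, m ≥ 1, k ≥ 1, and let S be any type. Let f be a function from matrices indexed by multi-indices (Fin k → Fin m) over F to S such that f(sᵗ * M * s) = f(M) for every matrix M and every invertible matrix s (i.e., f is an invariant of quadratic forms under congruence). If A, B : Matrix (Fin m) (Fin m × Fin m) F are MSCs of isomorphic algebras, i.e., B = τ(g, A) for some invertible g, then f(T̃r((B^t̄ B)^⊗̄k)) = f(T̃r((A^t̄ A)^⊗̄k)). (Theorem 1: invariants of the quadratic forms given by the matrices T̃r((X^t̄ X)^⊗̄k) are invariants of m-dimensional algebras.) -/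
open Matrix Kronecker

/-- The matrix `T̃r((Aᵗ̄A)^⊗̄k)`, indexed by multi-indices, whose `(i, j)` entry is the trace
of the ordered product `A_{i 0} A_{j 0} A_{i 1} A_{j 1} ⋯ A_{i (k-1)} A_{j (k-1)}`. -/
def trFormPow {F : Type*} [Field F] {m : ℕ} (k : ℕ) (A : Matrix (Fin m) (Fin m × Fin m) F) :
    Matrix (Fin k → Fin m) (Fin k → Fin m) F :=
  fun i j => ((List.ofFn fun l : Fin k => blk A (i l) * blk A (j l)).prod).trace

lemma aux_conj_list {F : Type*} [Field F] {m : ℕ} (g h : Matrix (Fin m) (Fin m) F)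
    (hgh : g * h = 1) (hhg : h * g = 1) (L : List (Matrix (Fin m) (Fin m) F)) :
    (L.map fun X => g * X * h).prod = g * L.prod * h := by
  induction L with
  | nil => simp [hgh]
  | cons a L ih =>
      simp only [List.map_cons, List.prod_cons, ih]
      rw [show g * a * h * (g * L.prod * h) = g * a * (h * g) * L.prod * h by
        noncomm_ring]
      rw [hhg]; noncomm_ring

lemma aux_expand {F : Type*} [Field F] {m : ℕ} {ι : Type*} [Fintype ι] [DecidableEq ι]
    (k : ℕ) (N : ι → Matrix (Fin m) (Fin m) F) (c : Fin k → ι → F) :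
    (List.ofFn fun l => ∑ p, c l p • N p).prod
      = ∑ φ : Fin k → ι, (∏ l, c l (φ l)) • (List.ofFn fun l => N (φ l)).prod := by
  induction k with
  | zero => simp
  | succ k ih =>
      rw [List.ofFn_succ, List.prod_cons, ih fun l => c l.succ]
      rw [Finset.sum_mul_sum]
      rw [← (Fin.consEquiv fun _ : Fin (k + 1) => ι).sum_comp]
      rw [Fintype.sum_prod_type]
      refine Finset.sum_congr rfl fun p _ => Finset.sum_congr rfl fun φ _ => ?_
      rw [smul_mul_smul_comm]
      congr 1
      · rw [Fin.prod_univ_succ]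
        simp [Fin.consEquiv]
      · rw [List.ofFn_succ]
        simp [Fin.consEquiv, List.prod_cons]

lemma aux_kron_mul {F : Type*} [Field F] {m k : ℕ} (u v : Matrix (Fin m) (Fin m) F) :
    (Matrix.of fun (a b : Fin k → Fin m) => ∏ l, u (a l) (b l)) *
      (Matrix.of fun (a b : Fin k → Fin m) => ∏ l, v (a l) (b l)) =
      Matrix.of fun a b => ∏ l, (u * v) (a l) (b l) := by
  ext a b
  simp only [Matrix.mul_apply, Matrix.of_apply]
  rw [Finset.prod_univ_sum, Fintype.piFinset_univ]
  exact Finset.sum_congr rfl fun φ _ => (Finset.prod_mul_distrib).symm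

lemma aux_kron_one {F : Type*} [Field F] {m k : ℕ} :
    (Matrix.of fun (a b : Fin k → Fin m) => ∏ l, (1 : Matrix (Fin m) (Fin m) F) (a l) (b l))
      = (1 : Matrix (Fin k → Fin m) (Fin k → Fin m) F) := by
  ext a b
  by_cases h : a = b
  · subst h; simp [Matrix.one_apply]
  · rw [Matrix.of_apply, Matrix.one_apply_ne h]
    obtain ⟨l, hl⟩ := Function.ne_iff.mp h
    exact Finset.prod_eq_zero (Finset.mem_univ l) (Matrix.one_apply_ne hl)

lemma aux_blkB {F : Type*} [Field F] {m : ℕ} (A B : Matrix (Fin m) (Fin m × Fin m) F)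
    (g : Matrix (Fin m) (Fin m) F)
    (hB : B = g * A * (g⁻¹ ⊗ₖ g⁻¹)) (p : Fin m) :
    blk B p = g * (∑ u, g⁻¹ u p • blk A u) * g⁻¹ := by
  ext a b
  simp only [hB, blk, Matrix.mul_apply, Matrix.kroneckerMap_apply, Matrix.mul_sum,
    Matrix.sum_apply, Matrix.smul_apply, smul_eq_mul, mul_smul_comm,
    Fintype.sum_prod_type, Finset.sum_mul, Finset.mul_sum]
  rw [Finset.sum_comm]
  refine Finset.sum_congr rfl fun u _ => ?_
  refine Finset.sum_congr rfl fun v _ => Finset.sum_congr rfl fun c _ => by ring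

theorem stmt_5 (F : Type*) [Field F] (hchar : ringChar F ≠ 2)
    (m k : ℕ) (hm : 1 ≤ m) (hk : 1 ≤ k) (S : Type*)
    (f : Matrix (Fin k → Fin m) (Fin k → Fin m) F → S)
    (hf : ∀ (M : Matrix (Fin k → Fin m) (Fin k → Fin m) F)
      (s : Matrix (Fin k → Fin m) (Fin k → Fin m) F), IsUnit s → f (sᵀ * M * s) = f M)
    (A B : Matrix (Fin m) (Fin m × Fin m) F)
    (g : Matrix (Fin m) (Fin m) F) (hg : IsUnit g)
    (hB : B = g * A * (g⁻¹ ⊗ₖ g⁻¹)) :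
    f (trFormPow k B) = f (trFormPow k A) := by
  have hdet : IsUnit g.det := (Matrix.isUnit_iff_isUnit_det g).mp hg
  have hgi : g * g⁻¹ = 1 := Matrix.mul_nonsing_inv g hdet
  have hig : g⁻¹ * g = 1 := Matrix.nonsing_inv_mul g hdet
  set H : Matrix (Fin k → Fin m) (Fin k → Fin m) F :=
    Matrix.of fun a b => ∏ l, g⁻¹ (a l) (b l) with hH
  set H' : Matrix (Fin k → Fin m) (Fin k → Fin m) F :=
    Matrix.of fun a b => ∏ l, g (a l) (b l) with hH'
  have hHunit : IsUnit H := by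
    rw [isUnit_iff_exists]
    refine ⟨H', ?_, ?_⟩
    · rw [hH, hH', aux_kron_mul, hig, aux_kron_one]
    · rw [hH, hH', aux_kron_mul, hgi, aux_kron_one]
  have key : trFormPow k B = Hᵀ * trFormPow k A * H := by
    ext i j
    have h1 : (fun l : Fin k => blk B (i l) * blk B (j l))
        = fun l => g * (∑ p : Fin m × Fin m,
            (g⁻¹ p.1 (i l) * g⁻¹ p.2 (j l)) • (blk A p.1 * blk A p.2)) * g⁻¹ := by
      funext l
      rw [aux_blkB A B g hB, aux_blkB A B g hB]
      rw [show ∀ X Y : Matrix (Fin m) (Fin m) F,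
        (g * X * g⁻¹) * (g * Y * g⁻¹) = g * (X * (g⁻¹ * g) * Y) * g⁻¹ from
        fun X Y => by noncomm_ring, hig, Matrix.mul_one]
      congr 2
      rw [Finset.sum_mul_sum, Fintype.sum_prod_type]
      exact Finset.sum_congr rfl fun u _ => Finset.sum_congr rfl fun v _ =>
        (smul_mul_smul_comm _ _ _ _)
    calc trFormPow k B i j
        = (g * ((List.ofFn fun l : Fin k =>
            ∑ p : Fin m × Fin m,
              (g⁻¹ p.1 (i l) * g⁻¹ p.2 (j l)) • (blk A p.1 * blk A p.2)).prod) * g⁻¹).trace := by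
          unfold trFormPow
          rw [h1, ← aux_conj_list g g⁻¹ hgi hig, List.map_ofFn]
          rfl
      _ = ((List.ofFn fun l : Fin k =>
            ∑ p : Fin m × Fin m,
              (g⁻¹ p.1 (i l) * g⁻¹ p.2 (j l)) • (blk A p.1 * blk A p.2)).prod).trace := by
          rw [Matrix.trace_mul_cycle, hig, Matrix.one_mul]
      _ = ∑ φ : Fin k → Fin m × Fin m,
            (∏ l, g⁻¹ (φ l).1 (i l) * g⁻¹ (φ l).2 (j l)) •
              ((List.ofFn fun l => blk A (φ l).1 * blk A (φ l).2).prod).trace := by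
          rw [aux_expand k (fun p : Fin m × Fin m => blk A p.1 * blk A p.2)
            (fun l p => g⁻¹ p.1 (i l) * g⁻¹ p.2 (j l))]
          rw [Matrix.trace_sum]
          exact Finset.sum_congr rfl fun φ _ => Matrix.trace_smul _ _
      _ = (Hᵀ * trFormPow k A * H) i j := by
          simp only [Matrix.mul_apply, Matrix.transpose_apply, hH, Matrix.of_apply,
            Finset.sum_mul, Finset.mul_sum]
          rw [← (Equiv.arrowProdEquivProdArrow (Fin k) (fun _ => Fin m) (fun _ => Fin m)).symm.sum_comp]
          rw [Fintype.sum_prod_type, Finset.sum_comm]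
          refine Finset.sum_congr rfl fun b' _ => Finset.sum_congr rfl fun a' _ => ?_
          simp only [Equiv.arrowProdEquivProdArrow, Equiv.coe_fn_symm_mk]
          rw [Finset.prod_mul_distrib]
          unfold trFormPow
          simp only [smul_eq_mul]
          ring
  rw [key, hf _ H hHunit]
end

section
/- Let F be a field, m ≥ 1, Ā : Matrix (Fin m) (Fin m × Fin m) F, C an invertible m×m matrix over F, and g an invertible m×m matrix over F. Set B̄ = g * Ā * (g⁻¹ ⊗ g⁻¹) and C̃ = g * C * gᵗ. Then B̄ * (C̃ ⊗ C̃) * B̄ᵗ * C̃⁻¹ * B̄ = g * (Ā * (C ⊗ C) * Āᵗ * C⁻¹ * Ā) * (g⁻¹ ⊗ g⁻¹); that is, the m×m² matrix Ā * (C ⊗ C) * Āᵗ * C⁻¹ * Ā transforms under τ(g, ·) in the same way as Ā itself. -/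
open Matrix Kronecker

theorem stmt_15 (F : Type*) [Field F] (m : ℕ) (hm : 1 ≤ m)
    (Abar : Matrix (Fin m) (Fin m × Fin m) F)
    (C : Matrix (Fin m) (Fin m) F) (hC : IsUnit C)
    (g : Matrix (Fin m) (Fin m) F) (hg : IsUnit g)
    (Bbar : Matrix (Fin m) (Fin m × Fin m) F)
    (hBbar : Bbar = g * Abar * (g⁻¹ ⊗ₖ g⁻¹))
    (Ctilde : Matrix (Fin m) (Fin m) F) (hCt : Ctilde = g * C * gᵀ) :
    Bbar * (Ctilde ⊗ₖ Ctilde) * Bbarᵀ * Ctilde⁻¹ * Bbar =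
      g * (Abar * (C ⊗ₖ C) * Abarᵀ * C⁻¹ * Abar) * (g⁻¹ ⊗ₖ g⁻¹) := by
  have hgd : IsUnit g.det := (Matrix.isUnit_iff_isUnit_det g).mp hg
  have hgt : IsUnit gᵀ.det := by simpa using hgd
  have hCd : IsUnit C.det := (Matrix.isUnit_iff_isUnit_det C).mp hC
  subst hBbar hCt
  have h1 : (g⁻¹ ⊗ₖ g⁻¹) * (g ⊗ₖ g) = 1 := by
    rw [← Matrix.mul_kronecker_mul, Matrix.nonsing_inv_mul g hgd,
      Matrix.one_kronecker_one]
  have h2 : (gᵀ ⊗ₖ gᵀ) * (g⁻¹ᵀ ⊗ₖ g⁻¹ᵀ) = 1 := by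
    rw [← Matrix.mul_kronecker_mul, Matrix.transpose_nonsing_inv,
      Matrix.mul_nonsing_inv gᵀ hgt, Matrix.one_kronecker_one]
  have hinv : (g * C * gᵀ)⁻¹ = gᵀ⁻¹ * C⁻¹ * g⁻¹ := by
    rw [Matrix.mul_inv_rev, Matrix.mul_inv_rev]; exact (Matrix.mul_assoc _ _ _).symm
  have hkron : (g * C * gᵀ) ⊗ₖ (g * C * gᵀ) = (g ⊗ₖ g) * (C ⊗ₖ C) * (gᵀ ⊗ₖ gᵀ) := by
    rw [← Matrix.mul_kronecker_mul, ← Matrix.mul_kronecker_mul]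
  have htr : (g * Abar * (g⁻¹ ⊗ₖ g⁻¹))ᵀ = (g⁻¹ᵀ ⊗ₖ g⁻¹ᵀ) * Abarᵀ * gᵀ := by
    simp [Matrix.transpose_mul, Matrix.kroneckerMap_transpose, Matrix.mul_assoc]
  rw [hkron, htr, hinv]
  have hgtinv : gᵀ * (gᵀ⁻¹ * C⁻¹ * g⁻¹) = C⁻¹ * g⁻¹ := by
    rw [← Matrix.mul_assoc, ← Matrix.mul_assoc, Matrix.mul_nonsing_inv gᵀ hgt, Matrix.one_mul]
  have hginvg : g⁻¹ * g = 1 := Matrix.nonsing_inv_mul g hgd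
  calc g * Abar * (g⁻¹ ⊗ₖ g⁻¹) * ((g ⊗ₖ g) * (C ⊗ₖ C) * (gᵀ ⊗ₖ gᵀ)) *
        ((g⁻¹ᵀ ⊗ₖ g⁻¹ᵀ) * Abarᵀ * gᵀ) * (gᵀ⁻¹ * C⁻¹ * g⁻¹) * (g * Abar * (g⁻¹ ⊗ₖ g⁻¹))
      = g * (Abar * (((g⁻¹ ⊗ₖ g⁻¹) * (g ⊗ₖ g)) * ((C ⊗ₖ C) *
          (((gᵀ ⊗ₖ gᵀ) * (g⁻¹ᵀ ⊗ₖ g⁻¹ᵀ)) * (Abarᵀ * ((gᵀ * (gᵀ⁻¹ * C⁻¹ * g⁻¹)) *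
          (g * (Abar * (g⁻¹ ⊗ₖ g⁻¹))))))))) := by
        simp only [Matrix.mul_assoc]
    _ = g * (Abar * (C ⊗ₖ C) * Abarᵀ * C⁻¹ * Abar) * (g⁻¹ ⊗ₖ g⁻¹) := by
        rw [h1, h2, hgtinv, Matrix.one_mul, Matrix.one_mul]
        rw [show C⁻¹ * g⁻¹ * (g * (Abar * (g⁻¹ ⊗ₖ g⁻¹))) =
          C⁻¹ * ((g⁻¹ * g) * (Abar * (g⁻¹ ⊗ₖ g⁻¹))) by simp only [Matrix.mul_assoc],
          hginvg, Matrix.one_mul]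
        simp only [Matrix.mul_assoc]
end

section
/- Let F be a field, m ≥ 1, Ā : Matrix (Fin m) (Fin m × Fin m) F, C an invertible m×m matrix over F, and g an invertible m×m matrix over F. Set B̄ = g * Ā * (g⁻¹ ⊗ g⁻¹) and C̃ = g * C * gᵗ. Then for i = 1, 2: Tr_i(B̄ * (C̃ ⊗ C̃) * B̄ᵗ * C̃⁻¹ * B̄) = Tr_i(Ā * (C ⊗ C) * Āᵗ * C⁻¹ * Ā) ᵥ* g⁻¹, where ᵥ* denotes multiplication of a row vector by a matrix; i.e., the rows Tr_i(Ā (C)^{⊗2} Āᵗ C⁻¹ Ā) transform by right multiplication by g⁻¹ and hence can be used to build the matrix P with property (1). -/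
open Matrix Kronecker

/-- The first partial trace `Tr₁(X)`, a row vector with `j`-th entry `∑ i, X i (i, j)`. -/
def tr1 {F : Type*} [Field F] {m : ℕ} (X : Matrix (Fin m) (Fin m × Fin m) F) :
    Fin m → F := fun j => ∑ i : Fin m, X i (i, j)

/-- The second partial trace `Tr₂(X)`, a row vector with `j`-th entry `∑ i, X i (j, i)`. -/
def tr2 {F : Type*} [Field F] {m : ℕ} (X : Matrix (Fin m) (Fin m × Fin m) F) :
    Fin m → F := fun j => ∑ i : Fin m, X i (j, i)

lemma tr1_conj {F : Type*} [Field F] {m : ℕ} (g h : Matrix (Fin m) (Fin m) F)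
    (hgh : h * g = 1) (X : Matrix (Fin m) (Fin m × Fin m) F) :
    tr1 (g * X * (h ⊗ₖ h)) = tr1 X ᵥ* h := by
  funext j
  simp only [tr1, vecMul, dotProduct]
  simp only [mul_apply, kroneckerMap_apply, Fintype.sum_prod_type, Finset.sum_mul,
    Finset.mul_sum]
  trans ∑ p, ∑ q : Fin m, X p (p, q) * h q j
  · rw [Finset.sum_comm]
    refine Finset.sum_congr rfl fun p _ => ?_
    rw [Finset.sum_comm]
    refine Finset.sum_congr rfl fun q _ => ?_
    rw [Finset.sum_comm]
    have e : ∀ k, ∑ i, g i k * X k (p, q) * (h p i * h q j)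
        = (h * g) p k * (X k (p, q) * h q j) := by
      intro k
      rw [mul_apply, Finset.sum_mul]
      exact Finset.sum_congr rfl fun i _ => by ring
    simp_rw [e, hgh, one_apply, ite_mul, one_mul, zero_mul]
    simp
  · rw [Finset.sum_comm]

lemma tr2_conj {F : Type*} [Field F] {m : ℕ} (g h : Matrix (Fin m) (Fin m) F)
    (hgh : h * g = 1) (X : Matrix (Fin m) (Fin m × Fin m) F) :
    tr2 (g * X * (h ⊗ₖ h)) = tr2 X ᵥ* h := by
  funext j
  simp only [tr2, vecMul, dotProduct]
  simp only [mul_apply, kroneckerMap_apply, Fintype.sum_prod_type, Finset.sum_mul,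
    Finset.mul_sum]
  trans ∑ p, ∑ q : Fin m, X q (p, q) * h p j
  · rw [Finset.sum_comm]
    refine Finset.sum_congr rfl fun p _ => ?_
    rw [Finset.sum_comm]
    refine Finset.sum_congr rfl fun q _ => ?_
    rw [Finset.sum_comm]
    have e : ∀ k, ∑ i, g i k * X k (p, q) * (h p j * h q i)
        = (h * g) q k * (X k (p, q) * h p j) := by
      intro k
      rw [mul_apply, Finset.sum_mul]
      exact Finset.sum_congr rfl fun i _ => by ring
    simp_rw [e, hgh, one_apply, ite_mul, one_mul, zero_mul]
    simp
  · simp [Finset.mul_sum]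

lemma conj_key (F : Type*) [Field F] (m : ℕ)
    (Abar : Matrix (Fin m) (Fin m × Fin m) F)
    (C : Matrix (Fin m) (Fin m) F)
    (g : Matrix (Fin m) (Fin m) F) (hg : IsUnit g) :
    (g * Abar * (g⁻¹ ⊗ₖ g⁻¹)) * ((g * C * gᵀ) ⊗ₖ (g * C * gᵀ)) *
        (g * Abar * (g⁻¹ ⊗ₖ g⁻¹))ᵀ * (g * C * gᵀ)⁻¹ * (g * Abar * (g⁻¹ ⊗ₖ g⁻¹))
      = g * (Abar * (C ⊗ₖ C) * Abarᵀ * C⁻¹ * Abar) * (g⁻¹ ⊗ₖ g⁻¹) := by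
  have hgd : IsUnit g.det := (isUnit_iff_isUnit_det g).mp hg
  have hgi : g⁻¹ * g = 1 := nonsing_inv_mul g hgd
  have hT : gᵀ * (g⁻¹)ᵀ = 1 := by rw [← transpose_mul, hgi, transpose_one]
  have hTi : gᵀ * (gᵀ)⁻¹ = 1 := by
    rw [← transpose_nonsing_inv]; exact hT
  have hinv : (g * C * gᵀ)⁻¹ = (gᵀ)⁻¹ * (C⁻¹ * g⁻¹) := by
    rw [Matrix.mul_inv_rev, Matrix.mul_inv_rev]
  rw [transpose_mul, transpose_mul, ← kroneckerMap_transpose, hinv]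
  rw [show ((g * C * gᵀ) ⊗ₖ (g * C * gᵀ)) = (g ⊗ₖ g) * (C ⊗ₖ C) * (gᵀ ⊗ₖ gᵀ) by
    rw [mul_kronecker_mul, mul_kronecker_mul]]
  have h1 : (g⁻¹ ⊗ₖ g⁻¹) * (g ⊗ₖ g) = 1 := by
    rw [← mul_kronecker_mul, hgi, one_kronecker_one]
  have h2 : (gᵀ ⊗ₖ gᵀ) * ((g⁻¹)ᵀ ⊗ₖ (g⁻¹)ᵀ) = 1 := by
    rw [← mul_kronecker_mul, hT, one_kronecker_one]
  calc g * Abar * (g⁻¹ ⊗ₖ g⁻¹) * ((g ⊗ₖ g) * (C ⊗ₖ C) * (gᵀ ⊗ₖ gᵀ)) *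
        ((g⁻¹)ᵀ ⊗ₖ (g⁻¹)ᵀ * (Abarᵀ * gᵀ)) * ((gᵀ)⁻¹ * (C⁻¹ * g⁻¹)) * (g * Abar * (g⁻¹ ⊗ₖ g⁻¹))
      = g * Abar * ((g⁻¹ ⊗ₖ g⁻¹) * (g ⊗ₖ g)) * (C ⊗ₖ C) *
        ((gᵀ ⊗ₖ gᵀ) * ((g⁻¹)ᵀ ⊗ₖ (g⁻¹)ᵀ)) * Abarᵀ * (gᵀ * (gᵀ)⁻¹) * C⁻¹ * (g⁻¹ * g) * Abar *
        (g⁻¹ ⊗ₖ g⁻¹) := by simp only [Matrix.mul_assoc]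
    _ = g * (Abar * (C ⊗ₖ C) * Abarᵀ * C⁻¹ * Abar) * (g⁻¹ ⊗ₖ g⁻¹) := by
        rw [h1, h2, hgi, Matrix.mul_one, hTi]
        simp only [Matrix.mul_assoc, Matrix.mul_one, Matrix.one_mul]

theorem stmt_16 (F : Type*) [Field F] (m : ℕ) (hm : 1 ≤ m)
    (Abar : Matrix (Fin m) (Fin m × Fin m) F)
    (C : Matrix (Fin m) (Fin m) F) (hC : IsUnit C)
    (g : Matrix (Fin m) (Fin m) F) (hg : IsUnit g)
    (Bbar : Matrix (Fin m) (Fin m × Fin m) F)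
    (hBbar : Bbar = g * Abar * (g⁻¹ ⊗ₖ g⁻¹))
    (Ctilde : Matrix (Fin m) (Fin m) F) (hCt : Ctilde = g * C * gᵀ) :
    tr1 (Bbar * (Ctilde ⊗ₖ Ctilde) * Bbarᵀ * Ctilde⁻¹ * Bbar) =
        tr1 (Abar * (C ⊗ₖ C) * Abarᵀ * C⁻¹ * Abar) ᵥ* g⁻¹ ∧
      tr2 (Bbar * (Ctilde ⊗ₖ Ctilde) * Bbarᵀ * Ctilde⁻¹ * Bbar) =
        tr2 (Abar * (C ⊗ₖ C) * Abarᵀ * C⁻¹ * Abar) ᵥ* g⁻¹ := by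
  have hgi : g⁻¹ * g = 1 := nonsing_inv_mul g ((isUnit_iff_isUnit_det g).mp hg)
  subst hBbar hCt
  rw [conj_key F m Abar C g hg]
  exact ⟨tr1_conj g g⁻¹ hgi _, tr2_conj g g⁻¹ hgi _⟩
end
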